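/- Suppose g : ℝ → ℝ is C³ near t₁, g(t₁) = M > 0, g'(t₁) = 0, g''(t₁) < 0. For ε ∈ (0,1) define h_ε(t) = 1/(1 − (1−ε) g(t)/M). Then as ε → 0, the integral of h_ε over the interval [t₁ − ε^{1/4}, t₁ + ε^{1/4}] satisfies ∫ h_ε dt = (π/√ε)·(1/√(−g''(t₁)/(2M))) + O(ε^{−1/4}). -/

import Mathlib

open Real MeasureTheory intervalIntegral

lemma my_arctan_le_self {x : ℝ} (hx : 0 ≤ x) : Real.arctan x ≤ x := by
  have h0 : 0 ≤ Real.arctan x := by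
    rw [← Real.arctan_zero]
    exact Real.arctan_strictMono.monotone hx
  calc Real.arctan x ≤ Real.tan (Real.arctan x) :=
        Real.le_tan h0 (Real.arctan_lt_pi_div_two x)
    _ = x := Real.tan_arctan x

lemma mvt_poly {f f' : ℝ → ℝ} {t₁ δ c : ℝ} {k : ℕ}
    (hd : ∀ u ∈ Set.Icc (t₁ - δ) (t₁ + δ), HasDerivAt f (f' u) u)
    (hb : ∀ u ∈ Set.Icc (t₁ - δ) (t₁ + δ), |f' u| ≤ c * |u - t₁| ^ k)
    (h0 : f t₁ = 0) (hc : 0 ≤ c) :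
    ∀ t ∈ Set.Icc (t₁ - δ) (t₁ + δ), |f t| ≤ c * |t - t₁| ^ (k + 1) := by
  intro t ht
  have hδ : 0 ≤ δ := by
    rcases ht with ⟨h1, h2⟩; linarith
  have ht₁ : t₁ ∈ Set.Icc (t₁ - δ) (t₁ + δ) := by
    constructor <;> linarith
  have hmem : Set.uIcc t₁ t ⊆ Set.Icc (t₁ - δ) (t₁ + δ) :=
    Set.uIcc_subset_Icc ht₁ ht
  have habs : ∀ u ∈ Set.uIcc t₁ t, |u - t₁| ≤ |t - t₁| := by
    intro u hu
    rcases le_total t₁ t with h | h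
    · rw [Set.uIcc_of_le h] at hu
      rw [abs_of_nonneg (by linarith [hu.1]), abs_of_nonneg (by linarith)]
      linarith [hu.2]
    · rw [Set.uIcc_of_ge h] at hu
      rw [abs_of_nonpos (by linarith [hu.2]), abs_of_nonpos (by linarith)]
      linarith [hu.1]
  have key := (convex_uIcc t₁ t).norm_image_sub_le_of_norm_hasDerivWithin_le
    (f := f) (f' := f') (C := c * |t - t₁| ^ k)
    (fun u hu => (hd u (hmem hu)).hasDerivWithinAt)
    (fun u hu => by
      have h1 := hb u (hmem hu)
      have h2 : |u - t₁| ^ k ≤ |t - t₁| ^ k :=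
        pow_le_pow_left₀ (abs_nonneg _) (habs u hu) k
      calc ‖f' u‖ = |f' u| := rfl
        _ ≤ c * |u - t₁| ^ k := h1
        _ ≤ c * |t - t₁| ^ k := by nlinarith [abs_nonneg (u - t₁)])
    Set.left_mem_uIcc Set.right_mem_uIcc
  have : ‖f t - f t₁‖ = |f t| := by rw [h0, sub_zero]; rfl
  rw [this] at key
  calc |f t| ≤ c * |t - t₁| ^ k * ‖t - t₁‖ := key
    _ = c * |t - t₁| ^ (k + 1) := by rw [Real.norm_eq_abs, pow_succ]; ring

set_option maxHeartbeats 1600000 in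
theorem laplace_type_asymptotic (g : ℝ → ℝ) (t₁ M : ℝ)
    (hg : ContDiffAt ℝ 3 g t₁) (hM : g t₁ = M) (hMpos : 0 < M)
    (h1 : deriv g t₁ = 0) (h2 : deriv (deriv g) t₁ < 0) :
    ∃ C > 0, ∃ ε₀ > 0, ∀ ε ∈ Set.Ioo (0 : ℝ) ε₀,
      |(∫ t in (t₁ - ε ^ ((1 : ℝ) / 4))..(t₁ + ε ^ ((1 : ℝ) / 4)),
          1 / (1 - (1 - ε) * g t / M)) -
        (π / Real.sqrt ε) * (1 / Real.sqrt (-(deriv (deriv g) t₁) / (2 * M)))| ≤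
      C * ε ^ (-(1 : ℝ) / 4) := by
  set dd : ℝ := deriv (deriv g) t₁ with hdd_def
  set a : ℝ := -dd / (2 * M) with ha_def
  have ha : 0 < a := div_pos (by linarith) (by linarith)
  -- neighborhood where g is C³
  obtain ⟨u, hu_nhds, hu⟩ := hg.contDiffOn (le_refl _) (by simp)
  obtain ⟨δ₁, hδ₁, hball⟩ := Metric.mem_nhds_iff.1 hu_nhds
  have hB : ContDiffOn ℝ 3 g (Metric.ball t₁ δ₁) := hu.mono hball
  have hBo : IsOpen (Metric.ball t₁ δ₁) := Metric.isOpen_ball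
  have h3 : ContDiffOn ℝ ((2 : ℕ) + 1) g (Metric.ball t₁ δ₁) := by
    exact_mod_cast hB
  rw [contDiffOn_succ_iff_deriv_of_isOpen hBo] at h3
  obtain ⟨hg_diff, -, h3'⟩ := h3
  have h2' : ContDiffOn ℝ ((1 : ℕ) + 1) (deriv g) (Metric.ball t₁ δ₁) := by
    exact_mod_cast h3'
  rw [contDiffOn_succ_iff_deriv_of_isOpen hBo] at h2'
  obtain ⟨hg'_diff, -, h2''⟩ := h2'
  -- Lipschitz bound on second derivative
  have hmem₁ : t₁ ∈ Metric.ball t₁ δ₁ := Metric.mem_ball_self hδ₁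
  have hcd1 : ContDiffAt ℝ 1 (deriv (deriv g)) t₁ :=
    (h2'' t₁ hmem₁).contDiffAt (hBo.mem_nhds hmem₁)
  obtain ⟨K, s, hs_nhds, hK⟩ := hcd1.exists_lipschitzOnWith
  obtain ⟨r, hr, hrs⟩ := Metric.mem_nhds_iff.1 hs_nhds
  set c : ℝ := (K : ℝ) + 1 with hc_def
  have hc : 0 < c := by positivity
  set δ : ℝ := min (min (δ₁ / 2) (r / 2)) (a * M / (2 * c)) with hδ_def
  have hδ : 0 < δ := by
    apply lt_min (lt_min (by linarith) (by linarith))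
    positivity
  have hδc : δ ≤ a * M / (2 * c) := min_le_right _ _
  have hIccB : Set.Icc (t₁ - δ) (t₁ + δ) ⊆ Metric.ball t₁ δ₁ := by
    intro t ht
    rw [Metric.mem_ball, Real.dist_eq]
    have h1 := ht.1; have h2 := ht.2
    have : δ ≤ δ₁ / 2 := le_trans (min_le_left _ _) (min_le_left _ _)
    rw [abs_sub_lt_iff]; constructor <;> linarith
  have hIccs : Set.Icc (t₁ - δ) (t₁ + δ) ⊆ s := by
    intro t ht
    apply hrs
    rw [Metric.mem_ball, Real.dist_eq]
    have h1 := ht.1; have h2 := ht.2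
    have : δ ≤ r / 2 := le_trans (min_le_left _ _) (min_le_right _ _)
    rw [abs_sub_lt_iff]; constructor <;> linarith
  have hLip : ∀ t ∈ Set.Icc (t₁ - δ) (t₁ + δ),
      |deriv (deriv g) t - dd| ≤ c * |t - t₁| := by
    intro t ht
    have ht₁ : t₁ ∈ Set.Icc (t₁ - δ) (t₁ + δ) := by constructor <;> linarith
    have := hK.dist_le_mul t (hIccs ht) t₁ (hIccs ht₁)
    rw [Real.dist_eq, Real.dist_eq] at this
    calc |deriv (deriv g) t - dd| ≤ (K : ℝ) * |t - t₁| := this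
      _ ≤ c * |t - t₁| := by
          have := abs_nonneg (t - t₁); nlinarith
  have hder1 : ∀ t ∈ Set.Icc (t₁ - δ) (t₁ + δ), HasDerivAt g (deriv g t) t := by
    intro t ht
    exact (hg_diff.differentiableAt (hBo.mem_nhds (hIccB ht))).hasDerivAt
  have hder2 : ∀ t ∈ Set.Icc (t₁ - δ) (t₁ + δ),
      HasDerivAt (deriv g) (deriv (deriv g) t) t := by
    intro t ht
    exact (hg'_diff.differentiableAt (hBo.mem_nhds (hIccB ht))).hasDerivAt
  have hcont : ContinuousOn g (Set.Icc (t₁ - δ) (t₁ + δ)) :=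
    (hB.continuousOn).mono hIccB
  -- Taylor estimates
  have hf1 : ∀ t ∈ Set.Icc (t₁ - δ) (t₁ + δ),
      |deriv g t - dd * (t - t₁)| ≤ c * |t - t₁| ^ 2 := by
    have := mvt_poly (f := fun t => deriv g t - dd * (t - t₁))
      (f' := fun t => deriv (deriv g) t - dd) (t₁ := t₁) (δ := δ) (c := c) (k := 1)
      (fun u hu => by
        have hd2 := hder2 u hu
        have hlin : HasDerivAt (fun t : ℝ => dd * (t - t₁)) dd u := by
          simpa using ((hasDerivAt_id u).sub_const t₁).const_mul dd
        exact hd2.sub hlin)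
      (fun u hu => by simpa [pow_one] using hLip u hu)
      (by simp [h1]) (le_of_lt hc)
    simpa using this
  have hf2 : ∀ t ∈ Set.Icc (t₁ - δ) (t₁ + δ),
      |g t - M - dd / 2 * (t - t₁) ^ 2| ≤ c * |t - t₁| ^ 3 := by
    have := mvt_poly (f := fun t => g t - M - dd / 2 * (t - t₁) ^ 2)
      (f' := fun t => deriv g t - dd * (t - t₁)) (t₁ := t₁) (δ := δ) (c := c) (k := 2)
      (fun u hu => by
        have hd1 := hder1 u hu
        have hsq : HasDerivAt (fun t : ℝ => dd / 2 * (t - t₁) ^ 2) (dd * (u - t₁)) u := by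
          have h := (((hasDerivAt_id u).sub_const t₁).pow 2).const_mul (dd / 2)
          refine h.congr_deriv ?_
          simp; ring
        exact (hd1.sub_const M).sub hsq)
      (fun u hu => hf1 u hu)
      (by simp [hM]) (le_of_lt hc)
    simpa using this
  -- rewrite Taylor with a
  have hdd2 : dd / 2 = -(a * M) := by
    rw [ha_def]; field_simp
  have hTay : ∀ t ∈ Set.Icc (t₁ - δ) (t₁ + δ),
      |g t - M + a * M * (t - t₁) ^ 2| ≤ c * |t - t₁| ^ 3 := by
    intro t ht
    have h := hf2 t ht
    rw [hdd2] at h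
    convert h using 2
    ring
  clear_value dd
  set sa : ℝ := Real.sqrt a with hsa_def
  have hsa_pos : 0 < sa := Real.sqrt_pos.2 ha
  have hsa_sq : sa ^ 2 = a := Real.sq_sqrt (le_of_lt ha)
  set C₁ : ℝ := 8 * c / (M * a * sa) with hC₁_def
  have hC₁ : 0 < C₁ := by positivity
  set s2 : ℝ := Real.sqrt 2 with hs2_def
  have hs2_sq : s2 ^ 2 = 2 := Real.sq_sqrt (by norm_num)
  have hs2_pos : 0 < s2 := Real.sqrt_pos.2 (by norm_num)
  have hC₁eq : C₁ * (a * sa / 8) = c / M := by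
    rw [hC₁_def]; field_simp
  have hδc' : 2 * (c * δ) ≤ a * M := by
    have h2c : (0:ℝ) < 2 * c := by positivity
    have h := (le_div_iff₀ h2c).1 hδc
    calc 2 * (c * δ) = δ * (2 * c) := by ring
      _ ≤ a * M := h
  clear_value sa C₁ s2 δ a c
  clear hδ_def hC₁_def hsa_def hs2_def hc_def ha_def hδc
  refine ⟨2 * C₁ + 4 / a + π * s2 / sa, by positivity, min (δ ^ 4) (1 / 2),
    by positivity, ?_⟩
  rintro ε ⟨hε, hε'⟩
  have hεδ4 : ε < δ ^ 4 := lt_of_lt_of_le hε' (min_le_left _ _)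
  have hεhalf : ε ≤ 1 / 2 := le_of_lt (lt_of_lt_of_le hε' (min_le_right _ _))
  set L : ℝ := ε ^ ((1 : ℝ) / 4) with hL_def
  have hL : 0 < L := Real.rpow_pos_of_pos hε _
  have hL4 : L ^ (4 : ℕ) = ε := by
    rw [hL_def, ← Real.rpow_natCast (ε ^ ((1 : ℝ) / 4)) 4,
      ← Real.rpow_mul (le_of_lt hε)]
    norm_num
  have hLδ : L ≤ δ := by
    have hlt : L ^ (4 : ℕ) < δ ^ (4 : ℕ) := by rw [hL4]; exact hεδ4
    exact le_of_lt (lt_of_pow_lt_pow_left₀ 4 (le_of_lt hδ) hlt)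
  have hL1 : L ≤ 1 := by
    by_contra hcon
    push_neg at hcon
    have h14 : (1 : ℝ) < L ^ (4 : ℕ) := one_lt_pow₀ hcon (by norm_num)
    rw [hL4] at h14; linarith
  have hsqε : Real.sqrt ε = L ^ 2 := by
    rw [← hL4, show (L ^ (4 : ℕ)) = (L ^ 2) ^ 2 by ring]
    exact Real.sqrt_sq (by positivity)
  have hεneg : ε ^ (-(1 : ℝ) / 4) = L⁻¹ := by
    rw [show (-(1 : ℝ) / 4) = -((1 : ℝ) / 4) by ring, Real.rpow_neg (le_of_lt hε), ← hL_def]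
  clear_value L
  set b : ℝ := (1 - ε) * a with hb_def
  have hb_pos : 0 < b := by
    rw [hb_def]; exact mul_pos (by linarith) ha
  have hba : b ≤ a := by
    have h := mul_le_mul_of_nonneg_right (by linarith : 1 - ε ≤ 1) ha.le
    rw [hb_def]; linarith [h]
  have hab2 : a / 2 ≤ b := by
    have h := mul_le_mul_of_nonneg_right (by linarith : 1/2 ≤ 1 - ε) ha.le
    rw [hb_def]; linarith [h]
  set sb : ℝ := Real.sqrt b with hsb_def
  have hsb_pos : 0 < sb := Real.sqrt_pos.2 hb_pos
  have hsb_sq : sb ^ 2 = b := Real.sq_sqrt (le_of_lt hb_pos)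
  clear_value b sb
  have hIccL : Set.Icc (t₁ - L) (t₁ + L) ⊆ Set.Icc (t₁ - δ) (t₁ + δ) :=
    Set.Icc_subset_Icc (by linarith) (by linarith)
  have hD_pos : ∀ t ∈ Set.Icc (t₁ - L) (t₁ + L),
      ε + a / 4 * (t - t₁) ^ 2 ≤ 1 - (1 - ε) * g t / M := by
    intro t ht
    have hTt := hTay t (hIccL ht)
    have hsL : |t - t₁| ≤ L := by
      rw [abs_le]; exact ⟨by linarith [ht.1], by linarith [ht.2]⟩
    have hcube : c * |t - t₁| ^ 3 ≤ a * M / 2 * (t - t₁) ^ 2 := by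
      have h2 : |t - t₁| ^ 2 = (t - t₁) ^ 2 := sq_abs _
      have h3 : c * |t - t₁| ≤ a * M / 2 := by
        have := mul_le_mul_of_nonneg_left (le_trans hsL hLδ) hc.le
        linarith
      calc c * |t - t₁| ^ 3 = (c * |t - t₁|) * |t - t₁| ^ 2 := by ring
        _ ≤ (a * M / 2) * |t - t₁| ^ 2 := by
            apply mul_le_mul_of_nonneg_right h3 (by positivity)
        _ = a * M / 2 * (t - t₁) ^ 2 := by rw [h2]
    have hRa := (abs_le.1 hTt).2
    have hX : a * M / 2 * (t - t₁) ^ 2 ≤ M - g t := by linarith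
    have key : 0 ≤ (1 - (1 - ε) * g t / M) - (ε + a / 4 * (t - t₁) ^ 2) := by
      have expand : (1 - (1 - ε) * g t / M) - (ε + a / 4 * (t - t₁) ^ 2)
          = ((1 - ε) * (M - g t) - a / 4 * (t - t₁) ^ 2 * M) / M := by
        field_simp; ring
      rw [expand]
      apply div_nonneg _ hMpos.le
      have hhalf : (1:ℝ) / 2 ≤ 1 - ε := by linarith
      have h5 := mul_le_mul_of_nonneg_left hX (by linarith : (0:ℝ) ≤ 1 - ε)
      have h6 : (1:ℝ)/2 * (a * M / 2 * (t - t₁)^2) ≤ (1 - ε) * (a * M / 2 * (t - t₁)^2) :=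
        mul_le_mul_of_nonneg_right hhalf (by positivity)
      linarith [h5, h6]
    linarith
  have hptdiff : ∀ t ∈ Set.Icc (t₁ - L) (t₁ + L),
      |1 / (1 - (1 - ε) * g t / M) - 1 / (ε + b * (t - t₁) ^ 2)| ≤ C₁ / L ^ 2 := by
    intro t ht
    have hD := hD_pos t ht
    have hP_pos : 0 < ε + a / 4 * (t - t₁) ^ 2 := by positivity
    have hD_pos' : 0 < 1 - (1 - ε) * g t / M := lt_of_lt_of_le hP_pos hD
    have hD0_pos : 0 < ε + b * (t - t₁) ^ 2 := by positivity
    have hD0_ge : ε + a / 4 * (t - t₁) ^ 2 ≤ ε + b * (t - t₁) ^ 2 := by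
      have h := mul_le_mul_of_nonneg_right (by linarith [hab2] : a / 4 ≤ b) (sq_nonneg (t - t₁))
      linarith [h]
    have hTt := hTay t (hIccL ht)
    have hnum : |(ε + b * (t - t₁) ^ 2) - (1 - (1 - ε) * g t / M)| ≤ c / M * |t - t₁| ^ 3 := by
      have expand : (ε + b * (t - t₁) ^ 2) - (1 - (1 - ε) * g t / M)
          = (1 - ε) * (g t - M + a * M * (t - t₁) ^ 2) / M := by
        rw [hb_def]; field_simp; ring
      rw [expand, abs_div, abs_mul, abs_of_pos hMpos,
        abs_of_pos (by linarith : (0:ℝ) < 1 - ε)]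
      rw [div_le_iff₀ hMpos]
      calc (1 - ε) * |g t - M + a * M * (t - t₁) ^ 2|
          ≤ 1 * (c * |t - t₁| ^ 3) := by
            apply mul_le_mul (by linarith) hTt (abs_nonneg _) (by norm_num)
        _ = c / M * |t - t₁| ^ 3 * M := by field_simp
    have hrecip : 1 / (1 - (1 - ε) * g t / M) - 1 / (ε + b * (t - t₁) ^ 2)
        = ((ε + b * (t - t₁) ^ 2) - (1 - (1 - ε) * g t / M)) /
          ((1 - (1 - ε) * g t / M) * (ε + b * (t - t₁) ^ 2)) := by
      rw [div_sub_div _ _ (ne_of_gt hD_pos') (ne_of_gt hD0_pos), one_mul, mul_one]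
    rw [hrecip, abs_div]
    have hden_ge : (ε + a / 4 * (t - t₁) ^ 2) ^ 2
        ≤ |(1 - (1 - ε) * g t / M) * (ε + b * (t - t₁) ^ 2)| := by
      rw [abs_of_pos (mul_pos hD_pos' hD0_pos)]
      have hmm := mul_le_mul hD hD0_ge hP_pos.le (le_trans hP_pos.le hD)
      calc (ε + a / 4 * (t - t₁) ^ 2) ^ 2
          = (ε + a / 4 * (t - t₁) ^ 2) * (ε + a / 4 * (t - t₁) ^ 2) := sq _
        _ ≤ (1 - (1 - ε) * g t / M) * (ε + b * (t - t₁) ^ 2) := hmm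
    have hkey : L ^ 2 * (a * sa / 8 * |t - t₁| ^ 3) ≤ (ε + a / 4 * (t - t₁) ^ 2) ^ 2 := by
      have hQ : (0:ℝ) ≤ a / 4 * (t - t₁) ^ 2 := by positivity
      have h6' : (a * sa / 8 * |t - t₁| ^ 3) ^ 2 = (a / 4 * (t - t₁) ^ 2) ^ 3 := by
        calc (a * sa / 8 * |t - t₁| ^ 3) ^ 2
            = a ^ 2 * sa ^ 2 * ((|t - t₁| ^ 2) ^ 3) / 64 := by ring
          _ = a ^ 2 * a * (((t - t₁) ^ 2) ^ 3) / 64 := by rw [hsa_sq, sq_abs]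
          _ = (a / 4 * (t - t₁) ^ 2) ^ 3 := by ring
      have h4 : ε * (a / 4 * (t - t₁) ^ 2) ^ 3 ≤ ((ε + a / 4 * (t - t₁) ^ 2) ^ 2) ^ 2 := by
        have hQle : a / 4 * (t - t₁) ^ 2 ≤ ε + a / 4 * (t - t₁) ^ 2 := by linarith
        have hεle : ε ≤ ε + a / 4 * (t - t₁) ^ 2 := by linarith
        have hmm : ε * (a / 4 * (t - t₁) ^ 2) ^ 3
            ≤ (ε + a / 4 * (t - t₁) ^ 2) * (ε + a / 4 * (t - t₁) ^ 2) ^ 3 :=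
          mul_le_mul hεle (pow_le_pow_left₀ hQ hQle 3) (by positivity) (by positivity)
        calc ε * (a / 4 * (t - t₁) ^ 2) ^ 3
            ≤ (ε + a / 4 * (t - t₁) ^ 2) * (ε + a / 4 * (t - t₁) ^ 2) ^ 3 := hmm
          _ = ((ε + a / 4 * (t - t₁) ^ 2) ^ 2) ^ 2 := by ring
      have h5 : Real.sqrt (ε * (a / 4 * (t - t₁) ^ 2) ^ 3) ≤ (ε + a / 4 * (t - t₁) ^ 2) ^ 2 := by
        calc Real.sqrt (ε * (a / 4 * (t - t₁) ^ 2) ^ 3)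
            ≤ Real.sqrt (((ε + a / 4 * (t - t₁) ^ 2) ^ 2) ^ 2) := Real.sqrt_le_sqrt h4
          _ = (ε + a / 4 * (t - t₁) ^ 2) ^ 2 := Real.sqrt_sq (by positivity)
      have h6 : Real.sqrt (ε * (a / 4 * (t - t₁) ^ 2) ^ 3)
          = L ^ 2 * (a * sa / 8 * |t - t₁| ^ 3) := by
        rw [Real.sqrt_mul hε.le, hsqε, ← h6', Real.sqrt_sq (by positivity)]
      rw [← h6]; exact h5
    calc |(ε + b * (t - t₁) ^ 2) - (1 - (1 - ε) * g t / M)| /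
          |(1 - (1 - ε) * g t / M) * (ε + b * (t - t₁) ^ 2)|
        ≤ (c / M * |t - t₁| ^ 3) / ((ε + a / 4 * (t - t₁) ^ 2) ^ 2) :=
          div_le_div₀ (by positivity) hnum (by positivity) hden_ge
      _ ≤ C₁ / L ^ 2 := by
          rw [div_le_div_iff₀ (by positivity) (by positivity)]
          have heq : c / M * |t - t₁| ^ 3 * L ^ 2
              = C₁ * (L ^ 2 * (a * sa / 8 * |t - t₁| ^ 3)) := by
            rw [← hC₁eq]; ring
          rw [heq]
          exact mul_le_mul_of_nonneg_left hkey hC₁.le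
  have hle : t₁ - L ≤ t₁ + L := by linarith
  have hcontD : ContinuousOn (fun t => 1 / (1 - (1 - ε) * g t / M))
      (Set.uIcc (t₁ - L) (t₁ + L)) := by
    rw [Set.uIcc_of_le hle]
    apply ContinuousOn.div continuousOn_const
    · exact continuousOn_const.sub
        ((continuousOn_const.mul (hcont.mono hIccL)).div_const M)
    · intro t ht
      have h := hD_pos t ht
      have hP : 0 < ε + a / 4 * (t - t₁) ^ 2 := by positivity
      exact ne_of_gt (lt_of_lt_of_le hP h)
  have hintD : IntervalIntegrable (fun t => 1 / (1 - (1 - ε) * g t / M))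
      volume (t₁ - L) (t₁ + L) := hcontD.intervalIntegrable
  have hcontD0 : Continuous (fun t : ℝ => 1 / (ε + b * (t - t₁) ^ 2)) := by
    apply Continuous.div continuous_const
      (continuous_const.add (continuous_const.mul
        ((continuous_id.sub continuous_const).pow 2)))
    intro t; have : 0 < ε + b * (t - t₁) ^ 2 := by positivity
    exact ne_of_gt this
  have hintD0 : IntervalIntegrable (fun t => 1 / (ε + b * (t - t₁) ^ 2))
      volume (t₁ - L) (t₁ + L) := hcontD0.intervalIntegrable _ _
  -- Step 1 : comparison of the two integrals
  have hstep1 : |(∫ t in (t₁ - L)..(t₁ + L), 1 / (1 - (1 - ε) * g t / M)) -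
      (∫ t in (t₁ - L)..(t₁ + L), 1 / (ε + b * (t - t₁) ^ 2))| ≤ 2 * C₁ * L⁻¹ := by
    rw [← intervalIntegral.integral_sub hintD hintD0]
    have hb1 : ∀ x ∈ Set.uIoc (t₁ - L) (t₁ + L),
        ‖1 / (1 - (1 - ε) * g x / M) - 1 / (ε + b * (x - t₁) ^ 2)‖ ≤ C₁ / L ^ 2 := by
      intro x hx
      rw [Set.uIoc_of_le hle] at hx
      exact hptdiff x (Set.Ioc_subset_Icc_self hx)
    have h := intervalIntegral.norm_integral_le_of_norm_le_const hb1
    rw [Real.norm_eq_abs] at h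
    have h2' : |t₁ + L - (t₁ - L)| = 2 * L := by
      rw [abs_of_nonneg (by linarith)]; ring
    rw [h2'] at h
    have h3' : C₁ / L ^ 2 * (2 * L) = 2 * C₁ * L⁻¹ := by
      field_simp
    linarith [h]
  -- Step 2 : FTC for the model integral
  have hF : ∀ t : ℝ, HasDerivAt
      (fun t => (L ^ 2 * sb)⁻¹ * Real.arctan (sb / L ^ 2 * (t - t₁)))
      (1 / (ε + b * (t - t₁) ^ 2)) t := by
    intro t
    have h1 : HasDerivAt (fun t : ℝ => sb / L ^ 2 * (t - t₁)) (sb / L ^ 2) t := by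
      simpa using ((hasDerivAt_id t).sub_const t₁).const_mul (sb / L ^ 2)
    have h2 := (Real.hasDerivAt_arctan (sb / L ^ 2 * (t - t₁))).comp t h1
    have h3 := HasDerivAt.const_mul ((L ^ 2 * sb)⁻¹) h2
    refine h3.congr_deriv ?_
    rw [show ε = (L ^ 2) ^ 2 by rw [← hL4]; ring, ← hsb_sq]
    have hL2 : (0:ℝ) < L ^ 2 := by positivity
    field_simp
  have hI0 : (∫ t in (t₁ - L)..(t₁ + L), 1 / (ε + b * (t - t₁) ^ 2))
      = 2 * ((L ^ 2 * sb)⁻¹ * Real.arctan (sb / L)) := by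
    rw [intervalIntegral.integral_eq_sub_of_hasDerivAt (fun x _ => hF x) hintD0]
    rw [show t₁ + L - t₁ = L by ring, show t₁ - L - t₁ = -L by ring]
    rw [show sb / L ^ 2 * L = sb / L by field_simp]
    rw [mul_neg, show sb / L ^ 2 * L = sb / L by field_simp]
    rw [Real.arctan_neg]
    ring
  have harct_nonneg : 0 ≤ Real.arctan ((sb / L)⁻¹) := by
    rw [← Real.arctan_zero]
    exact Real.arctan_strictMono.monotone (by positivity)
  have hstep2 : |(∫ t in (t₁ - L)..(t₁ + L), 1 / (ε + b * (t - t₁) ^ 2)) -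
      π * (L ^ 2 * sb)⁻¹| ≤ 4 / a * L⁻¹ := by
    rw [hI0]
    have h1 : Real.arctan ((sb / L)⁻¹) = π / 2 - Real.arctan (sb / L) :=
      Real.arctan_inv_of_pos (by positivity)
    have h2 : Real.arctan ((sb / L)⁻¹) ≤ (sb / L)⁻¹ := my_arctan_le_self (by positivity)
    have e1 : 2 * ((L ^ 2 * sb)⁻¹ * Real.arctan (sb / L)) - π * (L ^ 2 * sb)⁻¹
        = -(2 * (L ^ 2 * sb)⁻¹ * (π / 2 - Real.arctan (sb / L))) := by ring
    rw [e1, abs_neg, ← h1, abs_of_nonneg (by positivity)]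
    have h4 : 2 * (L ^ 2 * sb)⁻¹ * Real.arctan ((sb / L)⁻¹)
        ≤ 2 * (L ^ 2 * sb)⁻¹ * (L / sb) := by
      apply mul_le_mul_of_nonneg_left _ (by positivity)
      calc Real.arctan ((sb / L)⁻¹) ≤ (sb / L)⁻¹ := h2
        _ = L / sb := by rw [inv_div]
    have e2 : 2 * (L ^ 2 * sb)⁻¹ * (L / sb) = 2 / (L * b) := by
      rw [← hsb_sq]; field_simp
    rw [e2] at h4
    have h5 : 2 / (L * b) ≤ 4 / a * L⁻¹ := by
      rw [div_le_iff₀ (by positivity : (0:ℝ) < L * b)]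
      have e3 : 4 / a * L⁻¹ * (L * b) = 4 * b / a := by field_simp
      rw [e3, le_div_iff₀ ha]
      linarith [hab2]
    linarith [h4, h5]
  -- Step 3 : from b to a in the main term
  have hsbsa : sb ≤ sa := by
    have h := hba
    rw [← hsa_sq, ← hsb_sq] at h
    exact (pow_le_pow_iff_left₀ hsb_pos.le hsa_pos.le (by norm_num)).1 h
  have h11 : sa ≤ s2 * sb := by
    have h : sa ^ 2 ≤ (s2 * sb) ^ 2 := by
      rw [hsa_sq, mul_pow, hs2_sq, hsb_sq]
      linarith [hab2]
    exact (pow_le_pow_iff_left₀ hsa_pos.le (by positivity) (by norm_num)).1 h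
  have hgap : (sa - sb) * (sa + sb) = ε * a := by
    have : sa ^ 2 - sb ^ 2 = ε * a := by rw [hsa_sq, hsb_sq, hb_def]; ring
    linarith [this, sq_abs sa]
  have hstep3 : |π * (L ^ 2 * sb)⁻¹ - π / L ^ 2 * (1 / sa)| ≤ π * s2 / sa * L⁻¹ := by
    have hx_nonneg : 0 ≤ π * (L ^ 2 * sb)⁻¹ - π / L ^ 2 * (1 / sa) := by
      have h := one_div_le_one_div_of_le hsb_pos hsbsa
      have e : π * (L ^ 2 * sb)⁻¹ - π / L ^ 2 * (1 / sa)
          = π / L ^ 2 * (1 / sb - 1 / sa) := by field_simp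
      rw [e]
      apply mul_nonneg (by positivity)
      linarith [h]
    rw [abs_of_nonneg hx_nonneg]
    have e : π * (L ^ 2 * sb)⁻¹ - π / L ^ 2 * (1 / sa)
        = π * (sa - sb) / (L ^ 2 * sa * sb) := by field_simp
    rw [e, show π * s2 / sa * L⁻¹ = π * s2 / (sa * L) by field_simp,
      div_le_div_iff₀ (by positivity) (by positivity : (0:ℝ) < sa * L)]
    have hsub_nonneg : 0 ≤ sa - sb := by linarith [hsbsa]
    have h7 : (sa - sb) * sa ≤ ε * a := by
      have h8 : (sa - sb) * sa ≤ (sa - sb) * (sa + sb) :=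
        mul_le_mul_of_nonneg_left (by linarith [hsb_pos]) hsub_nonneg
      rw [hgap] at h8
      exact h8
    calc π * (sa - sb) * (sa * L) = π * L * ((sa - sb) * sa) := by ring
      _ ≤ π * L * (ε * a) := mul_le_mul_of_nonneg_left h7 (by positivity)
      _ = π * a * (L ^ 5) := by rw [← hL4]; ring
      _ ≤ π * a * (L ^ 2) := by
          have hp := pow_le_pow_of_le_one hL.le hL1 (show 2 ≤ 5 by norm_num)
          exact mul_le_mul_of_nonneg_left hp (by positivity)
      _ = π * L ^ 2 * (sa * sa) := by
          rw [show sa * sa = sa ^ 2 by ring, hsa_sq]; ring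
      _ ≤ π * L ^ 2 * (sa * (s2 * sb)) :=
          mul_le_mul_of_nonneg_left
            (mul_le_mul_of_nonneg_left h11 hsa_pos.le) (by positivity)
      _ = π * s2 * (L ^ 2 * sa * sb) := by ring
  -- Final assembly
  rw [hεneg, hsqε]
  have tri1 := abs_sub_le
    (∫ t in (t₁ - L)..(t₁ + L), 1 / (1 - (1 - ε) * g t / M))
    (∫ t in (t₁ - L)..(t₁ + L), 1 / (ε + b * (t - t₁) ^ 2))
    (π / L ^ 2 * (1 / sa))
  have tri2 := abs_sub_le
    (∫ t in (t₁ - L)..(t₁ + L), 1 / (ε + b * (t - t₁) ^ 2))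
    (π * (L ^ 2 * sb)⁻¹)
    (π / L ^ 2 * (1 / sa))
  have final : (2 * C₁) * L⁻¹ + (4 / a) * L⁻¹ + (π * s2 / sa) * L⁻¹
      = (2 * C₁ + 4 / a + π * s2 / sa) * L⁻¹ := by ring
  linarith [hstep1, hstep2, hstep3, tri1, tri2]
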